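/- Let G be a finite connected graph and v0 a vertex. Construct the graph 𝒢(v0) on vertex set V ⊔ V' (two disjoint copies of V) whose edges are: {u,w} and {u',w'} for every non-cross edge {u,w} of G, and {u,w'} and {u',w} for every cross edge {u,w} of G with respect to v0. Then 𝒢(v0) is bipartite. -/

import Mathlib

open SimpleGraph Sum

variable {V : Type*}

/-- The bipartite double construction `𝒢(v0)` of `G` with respect to `v0`: two copies of `V`;
every non-cross edge of `G` is kept inside each copy, and every cross edge `{u,w}`
(i.e. `d(v0,u) = d(v0,w)`) is replaced by the two edges `{u,w′}` and `{u′,w}` between the copies. -/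
def doubleCover (G : SimpleGraph V) (v0 : V) : SimpleGraph (V ⊕ V) where
  Adj x y :=
    match x, y with
    | inl u, inl w => G.Adj u w ∧ G.dist v0 u ≠ G.dist v0 w
    | inr u, inr w => G.Adj u w ∧ G.dist v0 u ≠ G.dist v0 w
    | inl u, inr w => G.Adj u w ∧ G.dist v0 u = G.dist v0 w
    | inr u, inl w => G.Adj u w ∧ G.dist v0 u = G.dist v0 w
  symm := by
    refine ⟨?_⟩
    rintro (u|u) (w|w) ⟨h1, h2⟩ <;> exact ⟨h1.symm, by omega⟩
  loopless := by
    refine ⟨?_⟩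
    rintro (u|u) ⟨h, _⟩ <;> exact G.ne_of_adj h rfl

/-- The graph `𝒢(v0)` is bipartite. -/
theorem doubleCover_bipartite [Fintype V] (G : SimpleGraph V) (hG : G.Connected) (v0 : V) :
    (doubleCover G v0).Colorable 2 := by
  have key : ∀ u w : V, G.Adj u w → G.dist v0 u ≤ G.dist v0 w + 1 := by
    intro u w h
    have := hG.dist_triangle (u := v0) (v := w) (w := u)
    have hd : G.dist w u = 1 := ((G.dist_eq_one_iff_adj).2 h.symm)
    omega
  open Fin.NatCast in
  refine ⟨⟨fun x => match x with
    | inl u => (G.dist v0 u : Fin 2)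
    | inr u => (G.dist v0 u + 1 : ℕ), ?_⟩⟩
  rintro (u|u) (w|w) ⟨h1, h2⟩ <;> simp only [ne_eq, Fin.natCast_self] <;>
    intro hc <;>
    have := key u w h1 <;> have := key w u h1.symm <;>
    · have hc' := congrArg Fin.val hc
      simp only [Fin.val_natCast] at hc'
      omega
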